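/- Let μ be a linear functional on one-variable polynomials with monic orthogonal polynomials (p_k) satisfying ⟨p_k,p_k⟩ = μ(p_k²) ≠ 0. For f_1,...,f_m, g_1,...,g_m polynomials, one has (1/m!) μ^{⊗m}( det_{1≤i,j≤m}(f_j(x_i)) · det_{1≤i,j≤m}(g_j(x_i)) ) = det_{1≤i,j≤m}( μ(f_i g_j) ). -/

import Mathlib

open Finset

/-- `μ^{⊗m}`: the linear functional `μ` applied in each of the `m` variables of a
polynomial in `m` variables. -/
noncomputable def tensorPow (μ : Polynomial ℝ →ₗ[ℝ] ℝ) (m : ℕ)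
    (f : MvPolynomial (Fin m) ℝ) : ℝ :=
  ∑ d ∈ f.support, f.coeff d * ∏ i : Fin m, μ (Polynomial.X ^ d i)

lemma tensorPow_eq_linearCombination (μ : Polynomial ℝ →ₗ[ℝ] ℝ) (m : ℕ)
    (f : MvPolynomial (Fin m) ℝ) :
    tensorPow μ m f = Finsupp.linearCombination ℝ
      (fun d : Fin m →₀ ℕ => ∏ i : Fin m, μ (Polynomial.X ^ d i)) (AddMonoidAlgebra.coeff f) := by
  rw [tensorPow, Finsupp.linearCombination_apply, Finsupp.sum]
  rfl

lemma tensorPow_sum (μ : Polynomial ℝ →ₗ[ℝ] ℝ) (m : ℕ) {α : Type*} (s : Finset α)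
    (F : α → MvPolynomial (Fin m) ℝ) :
    tensorPow μ m (∑ a ∈ s, F a) = ∑ a ∈ s, tensorPow μ m (F a) := by
  simp only [tensorPow_eq_linearCombination]
  rw [AddMonoidAlgebra.coeff_sum]
  exact map_sum _ _ _

lemma tensorPow_smul (μ : Polynomial ℝ →ₗ[ℝ] ℝ) (m : ℕ) (c : ℝ)
    (p : MvPolynomial (Fin m) ℝ) :
    tensorPow μ m (c • p) = c * tensorPow μ m p := by
  simp only [tensorPow_eq_linearCombination]
  rw [AddMonoidAlgebra.coeff_smul, map_smul, smul_eq_mul]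

open MvPolynomial in
lemma tensorPow_prod_X_pow (μ : Polynomial ℝ →ₗ[ℝ] ℝ) (m : ℕ) (d : Fin m → ℕ) :
    tensorPow μ m (∏ i, (X i : MvPolynomial (Fin m) ℝ) ^ d i)
      = ∏ i, μ (Polynomial.X ^ d i) := by
  have h : (∏ i, (X i : MvPolynomial (Fin m) ℝ) ^ d i)
      = monomial (Finsupp.equivFunOnFinite.symm d) 1 := by
    rw [monomial_eq, map_one, one_mul, Finsupp.prod_fintype]
    · rfl
    · intro i; exact pow_zero _
  rw [h, tensorPow_eq_linearCombination]
  have h2 : AddMonoidAlgebra.coeff (monomial (Finsupp.equivFunOnFinite.symm d) (1:ℝ))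
      = Finsupp.single (Finsupp.equivFunOnFinite.symm d) (1:ℝ) := rfl
  rw [h2, Finsupp.linearCombination_single, one_smul]
  rfl

lemma tensorPow_prod_aeval (μ : Polynomial ℝ →ₗ[ℝ] ℝ) (m : ℕ) (q : Fin m → Polynomial ℝ) :
    tensorPow μ m (∏ i, Polynomial.aeval (MvPolynomial.X i : MvPolynomial (Fin m) ℝ) (q i))
      = ∏ i, μ (q i) := by
  have hq : ∀ i : Fin m, Polynomial.aeval (MvPolynomial.X i : MvPolynomial (Fin m) ℝ) (q i)
      = ∑ k ∈ range ((q i).natDegree + 1), (q i).coeff k • (MvPolynomial.X i) ^ k :=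
    fun i => Polynomial.aeval_eq_sum_range _
  have hμ : ∀ i : Fin m, μ (q i)
      = ∑ k ∈ range ((q i).natDegree + 1), (q i).coeff k • μ (Polynomial.X ^ k) := by
    intro i
    conv_lhs => rw [← Polynomial.aeval_X_left_apply (q i),
      Polynomial.aeval_eq_sum_range (Polynomial.X : Polynomial ℝ)]
    rw [map_sum]
    simp
  simp only [hq]
  rw [Finset.prod_univ_sum, tensorPow_sum]
  have hterm : ∀ d ∈ Fintype.piFinset (fun i : Fin m => range ((q i).natDegree + 1)),
      tensorPow μ m
        (∏ i, (q i).coeff (d i) • (MvPolynomial.X i : MvPolynomial (Fin m) ℝ) ^ (d i))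
      = (∏ i, (q i).coeff (d i)) * ∏ i, μ (Polynomial.X ^ d i) := by
    intro d _
    have hsm : (∏ i, (q i).coeff (d i) • (MvPolynomial.X i : MvPolynomial (Fin m) ℝ) ^ (d i))
        = (∏ i, (q i).coeff (d i)) • ∏ i, (MvPolynomial.X i : MvPolynomial (Fin m) ℝ) ^ (d i) := by
      simp [Algebra.smul_def, Finset.prod_mul_distrib, ← map_prod]
    rw [hsm, tensorPow_smul, tensorPow_prod_X_pow]
  rw [Finset.sum_congr rfl hterm]
  simp only [hμ]
  rw [Finset.prod_univ_sum]
  refine Finset.sum_congr rfl fun d _ => ?_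
  simp [Finset.prod_mul_distrib]

theorem andreief_identity (μ : Polynomial ℝ →ₗ[ℝ] ℝ)
    (p : ℕ → Polynomial ℝ)
    (hdeg : ∀ k, (p k).natDegree = k) (hmonic : ∀ k, (p k).Monic)
    (horth : ∀ j k, j ≠ k → μ (p j * p k) = 0)
    (hnz : ∀ k, μ (p k * p k) ≠ 0)
    (m : ℕ) (f g : Fin m → Polynomial ℝ) :
    (1 / (m.factorial : ℝ)) * tensorPow μ m
        (Matrix.det (Matrix.of fun i j : Fin m =>
          Polynomial.aeval (MvPolynomial.X i : MvPolynomial (Fin m) ℝ) (f j)) *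
         Matrix.det (Matrix.of fun i j : Fin m =>
          Polynomial.aeval (MvPolynomial.X i : MvPolynomial (Fin m) ℝ) (g j))) =
      Matrix.det (Matrix.of fun i j : Fin m => μ (f i * g j)) := by
  classical
  have hz : ∀ (z : ℤ) (P : MvPolynomial (Fin m) ℝ),
      (z : MvPolynomial (Fin m) ℝ) * P = (z : ℝ) • P := by
    intro z P
    rw [MvPolynomial.smul_eq_C_mul, map_intCast]
  have key : tensorPow μ m
        (Matrix.det (Matrix.of fun i j : Fin m =>
          Polynomial.aeval (MvPolynomial.X i : MvPolynomial (Fin m) ℝ) (f j)) *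
         Matrix.det (Matrix.of fun i j : Fin m =>
          Polynomial.aeval (MvPolynomial.X i : MvPolynomial (Fin m) ℝ) (g j)))
      = ∑ σ : Equiv.Perm (Fin m), ∑ τ : Equiv.Perm (Fin m),
          ((Equiv.Perm.sign σ : ℤ) : ℝ) * ((Equiv.Perm.sign τ : ℤ) : ℝ) *
            ∏ j, μ (f (σ⁻¹ j) * g (τ⁻¹ j)) := by
    rw [Matrix.det_apply', Matrix.det_apply', Finset.sum_mul_sum, tensorPow_sum]
    refine Finset.sum_congr rfl fun σ _ => ?_
    rw [tensorPow_sum]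
    refine Finset.sum_congr rfl fun τ _ => ?_
    have e1 : (∏ i, (Matrix.of fun i j : Fin m =>
          Polynomial.aeval (MvPolynomial.X i : MvPolynomial (Fin m) ℝ) (f j)) (σ i) i)
        = ∏ j, Polynomial.aeval (MvPolynomial.X j : MvPolynomial (Fin m) ℝ) (f (σ⁻¹ j)) := by
      rw [← Equiv.prod_comp σ
        (fun j => Polynomial.aeval (MvPolynomial.X j : MvPolynomial (Fin m) ℝ) (f (σ⁻¹ j)))]
      simp [Matrix.of_apply]
    have e2 : (∏ i, (Matrix.of fun i j : Fin m =>
          Polynomial.aeval (MvPolynomial.X i : MvPolynomial (Fin m) ℝ) (g j)) (τ i) i)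
        = ∏ j, Polynomial.aeval (MvPolynomial.X j : MvPolynomial (Fin m) ℝ) (g (τ⁻¹ j)) := by
      rw [← Equiv.prod_comp τ
        (fun j => Polynomial.aeval (MvPolynomial.X j : MvPolynomial (Fin m) ℝ) (g (τ⁻¹ j)))]
      simp [Matrix.of_apply]
    have e4 : ((((Equiv.Perm.sign σ : ℤ) : MvPolynomial (Fin m) ℝ)) *
          ∏ i, (Matrix.of fun i j : Fin m =>
            Polynomial.aeval (MvPolynomial.X i : MvPolynomial (Fin m) ℝ) (f j)) (σ i) i) *
        ((((Equiv.Perm.sign τ : ℤ) : MvPolynomial (Fin m) ℝ)) *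
          ∏ i, (Matrix.of fun i j : Fin m =>
            Polynomial.aeval (MvPolynomial.X i : MvPolynomial (Fin m) ℝ) (g j)) (τ i) i)
        = (((Equiv.Perm.sign σ : ℤ) : ℝ) * ((Equiv.Perm.sign τ : ℤ) : ℝ)) •
            ∏ j, Polynomial.aeval (MvPolynomial.X j : MvPolynomial (Fin m) ℝ)
              (f (σ⁻¹ j) * g (τ⁻¹ j)) := by
      have e3 : (∏ j, Polynomial.aeval (MvPolynomial.X j : MvPolynomial (Fin m) ℝ) (f (σ⁻¹ j))) *
            ∏ j, Polynomial.aeval (MvPolynomial.X j : MvPolynomial (Fin m) ℝ) (g (τ⁻¹ j))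
          = ∏ j, Polynomial.aeval (MvPolynomial.X j : MvPolynomial (Fin m) ℝ)
              (f (σ⁻¹ j) * g (τ⁻¹ j)) := by
        rw [← Finset.prod_mul_distrib]
        simp [map_mul]
      rw [mul_mul_mul_comm, e1, e2, e3, ← Int.cast_mul, hz]
      push_cast
      ring_nf
    rw [e4, tensorPow_smul, tensorPow_prod_aeval μ m fun j => f (σ⁻¹ j) * g (τ⁻¹ j)]
  have key2 : ∀ σ : Equiv.Perm (Fin m),
      (∑ τ : Equiv.Perm (Fin m),
        ((Equiv.Perm.sign σ : ℤ) : ℝ) * ((Equiv.Perm.sign τ : ℤ) : ℝ) *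
          ∏ j, μ (f (σ⁻¹ j) * g (τ⁻¹ j)))
      = Matrix.det (Matrix.of fun i j : Fin m => μ (f i * g j)) := by
    intro σ
    rw [← Matrix.det_transpose, Matrix.det_apply']
    refine Fintype.sum_equiv ((Equiv.inv (Equiv.Perm (Fin m))).trans (Equiv.mulRight σ))
      _ _ fun τ => ?_
    have hsign : ((Equiv.Perm.sign (τ⁻¹ * σ) : ℤ) : ℝ)
        = ((Equiv.Perm.sign σ : ℤ) : ℝ) * ((Equiv.Perm.sign τ : ℤ) : ℝ) := by
      rw [map_mul, Equiv.Perm.sign_inv]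
      push_cast
      ring
    have hprod : (∏ j, μ (f (σ⁻¹ j) * g (τ⁻¹ j)))
        = ∏ k, μ (f k * g ((τ⁻¹ * σ) k)) := by
      rw [← Equiv.prod_comp σ (fun j => μ (f (σ⁻¹ j) * g (τ⁻¹ j)))]
      simp [Equiv.Perm.mul_apply]
    simp only [Equiv.trans_apply, Equiv.inv_apply, Equiv.coe_mulRight]
    rw [hsign, hprod]
    simp [Matrix.transpose_apply, Matrix.of_apply, Equiv.Perm.mul_apply]
  rw [key, Finset.sum_congr rfl (fun σ _ => key2 σ), Finset.sum_const, card_univ,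
    Fintype.card_perm, Fintype.card_fin, nsmul_eq_mul, ← mul_assoc, one_div,
    inv_mul_cancel₀ (by exact_mod_cast Nat.factorial_ne_zero m), one_mul]
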